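/- Define f_z(u) := (1/2) erfc(√2 (z−u)) for z,u ∈ ℂ, and for a > 0 set F₁(z,w) := (1/√2) ∫_{−a}^{a} [ e^{−2(z−u)²} erfc(√2(w−u)) − e^{−2(w−u)²} erfc(√2(z−u)) ] du. Then ∂_z F₁(z,w) = e^{−(z−w)²} ( erfc(z+w−2a) − erfc(z+w+2a) ) − (1/√2) ( e^{−2(z−a)²} erfc(√2(w−a)) − e^{−2(z+a)²} erfc(√2(w+a)) ). -/

import Mathlib

open Complex intervalIntegral

/-- The error function, extended to an entire function of a complex variable. -/
noncomputable def cerf (z : ℂ) : ℂ :=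
  (2 / Real.sqrt Real.pi) * z * ∫ s in (0:ℝ)..1, Complex.exp (-((s:ℂ) * z)^2)

/-- The complementary error function `erfc z = 1 − erf z`, entire in `z`. -/
noncomputable def cerfc (z : ℂ) : ℂ := 1 - cerf z

/-- `F₁(z,w) = (1/√2) ∫_{−a}^{a} [e^(−2(z−u)²) erfc(√2(w−u)) − e^(−2(w−u)²) erfc(√2(z−u))] du`. -/
noncomputable def F1 (a : ℝ) (z w : ℂ) : ℂ :=
  (1 / Real.sqrt 2) * ∫ u in (-a)..a,
    (Complex.exp (-2*(z-(u:ℂ))^2) * cerfc (Real.sqrt 2 * (w - (u:ℂ)))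
      - Complex.exp (-2*(w-(u:ℂ))^2) * cerfc (Real.sqrt 2 * (z - (u:ℂ))))

open MeasureTheory Metric Filter

/-- derivative of `x ↦ x * exp (-(c*x)^2)` -/
lemma key_deriv (c x : ℂ) :
    HasDerivAt (fun x : ℂ => x * Complex.exp (-(c*x)^2))
      ((1 - 2*c^2*x^2) * Complex.exp (-(c*x)^2)) x := by
  have h1 : HasDerivAt (fun x : ℂ => -(c*x)^2) (-(2*c^2*x)) x := by
    have := (((hasDerivAt_id x).const_mul c).pow 2).neg
    refine HasDerivAt.congr_deriv this ?_
    simp only [id_eq, pow_one, Nat.cast_ofNat, mul_one]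
    ring
  have h2 := h1.cexp
  have := (hasDerivAt_id x).mul h2
  refine HasDerivAt.congr_deriv this ?_
  simp only [id_eq]
  ring

lemma hasDerivAt_cerf (z : ℂ) :
    HasDerivAt cerf (2 / Real.sqrt Real.pi * Complex.exp (-z^2)) z := by
  have hrw : cerf = fun ζ : ℂ =>
      (2 / Real.sqrt Real.pi) * ∫ s in (0:ℝ)..1, ζ * Complex.exp (-((s:ℂ)*ζ)^2) := by
    funext ζ
    simp only [cerf, mul_assoc, intervalIntegral.integral_const_mul]
  rw [hrw]
  set G' : ℂ → ℝ → ℂ := fun x s => (1 - 2*(s:ℂ)^2*x^2) * Complex.exp (-((s:ℂ)*x)^2) with hG'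
  have hcont : Continuous fun p : ℂ × ℝ => G' p.1 p.2 := by
    apply Continuous.mul
    · fun_prop
    · exact Continuous.cexp (by fun_prop)
  have hcontF : ∀ x : ℂ, Continuous fun s : ℝ => x * Complex.exp (-((s:ℂ)*x)^2) := by
    intro x
    exact continuous_const.mul (Continuous.cexp (by fun_prop))
  have hcontG'z : Continuous (G' z) :=
    (hcont.comp (Continuous.prodMk_right z)).congr (fun s => rfl)
  obtain ⟨C, hC⟩ := ((isCompact_closedBall z 1).prod
    (isCompact_uIcc (a := (0:ℝ)) (b := 1))).exists_bound_of_continuousOn hcont.continuousOn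
  have main := (intervalIntegral.hasDerivAt_integral_of_dominated_loc_of_deriv_le
      (F := fun x : ℂ => fun s : ℝ => x * Complex.exp (-((s:ℂ)*x)^2))
      (F' := G') (x₀ := z) (bound := fun _ => C) (μ := volume) (a := (0:ℝ)) (b := 1)
      (ball_mem_nhds z one_pos)
      (Eventually.of_forall fun x => (hcontF x).aestronglyMeasurable)
      ((hcontF z).intervalIntegrable _ _)
      hcontG'z.aestronglyMeasurable
      (Eventually.of_forall fun s hs => fun x hx =>
        hC (x, s) (Set.mk_mem_prod (ball_subset_closedBall hx) (Set.uIoc_subset_uIcc hs)))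
      intervalIntegrable_const
      (Eventually.of_forall fun s hs => fun x hx => key_deriv (s:ℂ) x)).2
  have hval : (∫ s in (0:ℝ)..1, G' z s) = Complex.exp (-z^2) := by
    have hderiv : ∀ s ∈ Set.uIcc (0:ℝ) 1,
        HasDerivAt (fun s : ℝ => (s:ℂ) * Complex.exp (-((s:ℂ)*z)^2)) (G' z s) s := by
      intro s _
      have h := key_deriv z
      have e1 : ∀ v : ℂ, -(z*v)^2 = -(v*z)^2 := fun v => by ring
      simp only [e1] at h
      have := (h (s:ℂ)).comp_ofReal
      convert this using 1
      simp only [hG']; ring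
    rw [intervalIntegral.integral_eq_sub_of_hasDerivAt hderiv
      (hcontG'z.intervalIntegrable _ _)]
    simp
  rw [hval] at main
  exact main.const_mul _

lemma hasDerivAt_cerfc (z : ℂ) :
    HasDerivAt cerfc (-(2 / Real.sqrt Real.pi * Complex.exp (-z^2))) z :=
  (hasDerivAt_cerf z).const_sub 1

lemma continuous_cerfc : Continuous cerfc :=
  continuous_iff_continuousAt.2 fun z => (hasDerivAt_cerfc z).differentiableAt.continuousAt

/-- The derivative of `F₁` in its first variable. -/
theorem hasDerivAt_F1 (a : ℝ) (ha : 0 < a) (w z : ℂ) :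
    HasDerivAt (fun ζ => F1 a ζ w)
      (Complex.exp (-(z-w)^2) * (cerfc (z+w-2*(a:ℂ)) - cerfc (z+w+2*(a:ℂ)))
        - (1 / Real.sqrt 2) *
          (Complex.exp (-2*(z-(a:ℂ))^2) * cerfc (Real.sqrt 2 * (w-(a:ℂ)))
            - Complex.exp (-2*(z+(a:ℂ))^2) * cerfc (Real.sqrt 2 * (w+(a:ℂ))))) z := by
  have hs2sq : ((Real.sqrt 2 : ℝ) : ℂ)^2 = 2 := by
    rw [← Complex.ofReal_pow, Real.sq_sqrt (by norm_num : (0:ℝ) ≤ 2)]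
    norm_num
  have hs2ne : ((Real.sqrt 2 : ℝ) : ℂ) ≠ 0 := by
    simpa using (Real.sqrt_ne_zero' (x := 2)).2 (by norm_num)
  set G : ℂ → ℝ → ℂ := fun x u =>
    Complex.exp (-2*(x-(u:ℂ))^2) * cerfc (Real.sqrt 2 * (w - (u:ℂ)))
      - Complex.exp (-2*(w-(u:ℂ))^2) * cerfc (Real.sqrt 2 * (x - (u:ℂ))) with hG
  set G' : ℂ → ℝ → ℂ := fun x u =>
    (-4*(x-(u:ℂ))) * Complex.exp (-2*(x-(u:ℂ))^2) * cerfc (Real.sqrt 2 * (w - (u:ℂ)))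
      + (2*(Real.sqrt 2 : ℂ)/(Real.sqrt Real.pi : ℂ)) *
          (Complex.exp (-2*(w-(u:ℂ))^2) * Complex.exp (-2*(x-(u:ℂ))^2)) with hG'
  -- derivative of G in the complex variable (at any complex point x, u real)
  have hGderiv : ∀ (u : ℝ) (x : ℂ), HasDerivAt (fun x => G x u) (G' x u) x := by
    intro u x
    have hA : HasDerivAt (fun x : ℂ => -2*(x-(u:ℂ))^2) (-4*(x-(u:ℂ))) x := by
      have := (((hasDerivAt_id x).sub_const ((u:ℂ))).pow 2).const_mul (-2 : ℂ)
      refine HasDerivAt.congr_deriv this ?_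
      simp only [id_eq, pow_one, Nat.cast_ofNat, mul_one]
      ring
    have term1 := hA.cexp.mul_const (cerfc (Real.sqrt 2 * (w - (u:ℂ))))
    have hB : HasDerivAt (fun x : ℂ => (Real.sqrt 2 : ℂ) * (x - (u:ℂ)))
        ((Real.sqrt 2 : ℂ)) x := by
      have := ((hasDerivAt_id x).sub_const ((u:ℂ))).const_mul ((Real.sqrt 2 : ℂ))
      simpa using this
    have earg : -((Real.sqrt 2 : ℂ) * (x - (u:ℂ)))^2 = -2*(x-(u:ℂ))^2 := by
      rw [mul_pow, hs2sq]; ring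
    have hC : HasDerivAt (fun x : ℂ => cerfc ((Real.sqrt 2 : ℂ) * (x - (u:ℂ))))
        ((-(2 / Real.sqrt Real.pi * Complex.exp (-2*(x-(u:ℂ))^2))) * (Real.sqrt 2 : ℂ)) x := by
      have := (hasDerivAt_cerfc ((Real.sqrt 2 : ℂ) * (x - (u:ℂ)))).comp x hB
      rw [earg] at this
      simpa [Function.comp_def] using this
    have term2 := hC.const_mul (Complex.exp (-2*(w-(u:ℂ))^2))
    have total := term1.sub term2
    refine HasDerivAt.congr_deriv total ?_
    simp only [hG']
    ring
  -- joint continuity facts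
  have hcontG' : Continuous fun p : ℂ × ℝ => G' p.1 p.2 := by
    simp only [hG']
    apply Continuous.add
    · apply Continuous.mul
      · apply Continuous.mul
        · fun_prop
        · exact Continuous.cexp (by fun_prop)
      · exact continuous_cerfc.comp (by fun_prop)
    · exact continuous_const.mul
        ((Continuous.cexp (by fun_prop)).mul (Continuous.cexp (by fun_prop)))
  have hcontGx : ∀ x : ℂ, Continuous fun u : ℝ => G x u := by
    intro x
    simp only [hG]
    exact ((Continuous.cexp (by fun_prop)).mul
        (continuous_cerfc.comp (by fun_prop))).sub
      ((Continuous.cexp (by fun_prop)).mul (continuous_cerfc.comp (by fun_prop)))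
  have hcontG'z : Continuous (G' z) :=
    (hcontG'.comp (Continuous.prodMk_right z)).congr (fun u => rfl)
  obtain ⟨C, hC⟩ := ((isCompact_closedBall z 1).prod
      (isCompact_uIcc (a := -a) (b := a))).exists_bound_of_continuousOn hcontG'.continuousOn
  have main := (intervalIntegral.hasDerivAt_integral_of_dominated_loc_of_deriv_le
      (F := G) (F' := G') (x₀ := z) (bound := fun _ => C) (μ := volume) (a := -a) (b := a)
      (ball_mem_nhds z one_pos)
      (Eventually.of_forall fun x => (hcontGx x).aestronglyMeasurable)
      ((hcontGx z).intervalIntegrable _ _)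
      hcontG'z.aestronglyMeasurable
      (Eventually.of_forall fun u hu => fun x hx =>
        hC (x, u) (Set.mk_mem_prod (ball_subset_closedBall hx) (Set.uIoc_subset_uIcc hu)))
      intervalIntegrable_const
      (Eventually.of_forall fun u hu => fun x hx => hGderiv u x)).2
  -- compute the integral of G' z via an explicit antiderivative Φ
  set Φ : ℝ → ℂ := fun u =>
    -Complex.exp (-2*(z-(u:ℂ))^2) * cerfc (Real.sqrt 2 * (w - (u:ℂ)))
      + (Real.sqrt 2 : ℂ) * Complex.exp (-(z-w)^2) * cerfc (z+w-2*(u:ℂ)) with hΦ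
  have hΦderiv : ∀ u : ℝ, HasDerivAt Φ (G' z u) u := by
    intro u
    have hcx : HasDerivAt (fun v : ℂ =>
        -Complex.exp (-2*(z-v)^2) * cerfc (Real.sqrt 2 * (w - v))
          + (Real.sqrt 2 : ℂ) * Complex.exp (-(z-w)^2) * cerfc (z+w-2*v))
        (G' z u) ((u:ℂ)) := by
      set v : ℂ := (u:ℂ)
      have h1 : HasDerivAt (fun v : ℂ => -2*(z-v)^2) (4*(z-v)) v := by
        have := (((hasDerivAt_id v).const_sub z).pow 2).const_mul (-2 : ℂ)
        refine HasDerivAt.congr_deriv this ?_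
        simp only [id_eq, pow_one, Nat.cast_ofNat]
        ring
      have h2 := (h1.cexp).neg
      have h3 : HasDerivAt (fun v : ℂ => (Real.sqrt 2 : ℂ) * (w - v))
          (-(Real.sqrt 2 : ℂ)) v := by
        have := ((hasDerivAt_id v).const_sub w).const_mul ((Real.sqrt 2 : ℂ))
        refine HasDerivAt.congr_deriv this ?_
        ring
      have earg2 : -((Real.sqrt 2 : ℂ) * (w - v))^2 = -2*(w-v)^2 := by
        rw [mul_pow, hs2sq]; ring
      have h4 : HasDerivAt (fun v : ℂ => cerfc ((Real.sqrt 2 : ℂ) * (w - v)))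
          ((-(2 / Real.sqrt Real.pi * Complex.exp (-2*(w-v)^2))) * (-(Real.sqrt 2 : ℂ))) v := by
        have := (hasDerivAt_cerfc ((Real.sqrt 2 : ℂ) * (w - v))).comp v h3
        rw [earg2] at this
        exact this
      have h5 := h2.mul h4
      have h6 : HasDerivAt (fun v : ℂ => z+w-2*v) (-2) v := by
        have := ((hasDerivAt_id v).const_mul (2:ℂ)).const_sub (z+w)
        refine HasDerivAt.congr_deriv this ?_
        ring
      have h7 : HasDerivAt (fun v : ℂ => cerfc (z+w-2*v))
          ((-(2 / Real.sqrt Real.pi * Complex.exp (-(z+w-2*v)^2))) * (-2)) v := by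
        exact (hasDerivAt_cerfc (z+w-2*v)).comp (h₂ := cerfc) v h6
      have h8 := h7.const_mul ((Real.sqrt 2 : ℂ) * Complex.exp (-(z-w)^2))
      have total := h5.add h8
      have key : Complex.exp (-(z-w)^2) * Complex.exp (-(z+w-2*v)^2)
          = Complex.exp (-2*(w-v)^2) * Complex.exp (-2*(z-v)^2) := by
        rw [← Complex.exp_add, ← Complex.exp_add]; congr 1; ring
      refine HasDerivAt.congr_deriv total ?_
      simp only [hG', Pi.neg_apply]
      linear_combination (4*(Real.sqrt 2 : ℂ)/(Real.sqrt Real.pi : ℂ)) * key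
    exact hcx.comp_ofReal
  have hval : (∫ u in (-a)..a, G' z u) = Φ a - Φ (-a) := by
    apply intervalIntegral.integral_eq_sub_of_hasDerivAt (fun u _ => hΦderiv u)
    exact hcontG'z.intervalIntegrable _ _
  rw [hval] at main
  have final := main.const_mul (1 / ((Real.sqrt 2 : ℝ) : ℂ))
  have hF1eq : (fun ζ => F1 a ζ w)
      = fun ζ => (1 / ((Real.sqrt 2 : ℝ) : ℂ)) * ∫ u in (-a)..a, G ζ u := by
    funext ζ
    simp only [F1, hG]
  rw [hF1eq]
  refine HasDerivAt.congr_deriv final ?_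
  simp only [hΦ]
  push_cast
  field_simp
  ring
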